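/- (Appendix, Case 1.) For the shared pure state ρ_{β,γ} (β, γ : ℝ with β² + γ² ≠ 0), Bob's normalized reduced state after the PT evolution with Alice applying A₊ = 1, namely ρ_B' = (Tr_A ρ₊)/Re(trace ρ₊), equals Bob's initial reduced state Tr_A ρ_{β,γ} if and only if β·γ·sin α = 0 (i.e., the state is a product state or sin α = 0). -/

import Mathlib

open Matrix Kronecker Complex
open scoped ComplexOrder

noncomputable section

/-- Pauli matrix `σx`. -/
def σx : Matrix (Fin 2) (Fin 2) ℂ := !![0, 1; 1, 0]

/-- Pauli matrix `σy`. -/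
def σy : Matrix (Fin 2) (Fin 2) ℂ := !![0, -Complex.I; Complex.I, 0]

/-- Pauli matrix `σz`. -/
def σz : Matrix (Fin 2) (Fin 2) ℂ := !![1, 0; 0, -1]

/-- The simulated PT-symmetric evolution operator at the chosen time. -/
def Upt (α : ℝ) : Matrix (Fin 2) (Fin 2) ℂ :=
  !![(Real.sin α : ℂ), -Complex.I; -Complex.I, -(Real.sin α : ℂ)]

/-- Alice's operation `A₊` (do nothing). -/
def Apos : Matrix (Fin 2) (Fin 2) ℂ := 1

/-- Alice's operation `A₋` (bit flip `σx`). -/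
def Aneg : Matrix (Fin 2) (Fin 2) ℂ := σx

/-- Unnormalized post-selected state after Alice applies `A₊` followed by the
simulated PT evolution. -/
def postPlus (α : ℝ) (ρ : Matrix (Fin 2 × Fin 2) (Fin 2 × Fin 2) ℂ) :
    Matrix (Fin 2 × Fin 2) (Fin 2 × Fin 2) ℂ :=
  ((Upt α * Apos) ⊗ₖ (1 : Matrix (Fin 2) (Fin 2) ℂ)) * ρ *
    ((Upt α * Apos) ⊗ₖ (1 : Matrix (Fin 2) (Fin 2) ℂ))ᴴ

/-- Unnormalized post-selected state after Alice applies `A₋` followed by the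
simulated PT evolution. -/
def postMinus (α : ℝ) (ρ : Matrix (Fin 2 × Fin 2) (Fin 2 × Fin 2) ℂ) :
    Matrix (Fin 2 × Fin 2) (Fin 2 × Fin 2) ℂ :=
  ((Upt α * Aneg) ⊗ₖ (1 : Matrix (Fin 2) (Fin 2) ℂ)) * ρ *
    ((Upt α * Aneg) ⊗ₖ (1 : Matrix (Fin 2) (Fin 2) ℂ))ᴴ

/-- Probability that Bob obtains outcome `Π` given Alice applied `A₊`. -/
def Pplus (α : ℝ) (ρ : Matrix (Fin 2 × Fin 2) (Fin 2 × Fin 2) ℂ)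
    (Pi : Matrix (Fin 2) (Fin 2) ℂ) : ℝ :=
  ((((1 : Matrix (Fin 2) (Fin 2) ℂ) ⊗ₖ Pi) * postPlus α ρ).trace).re /
    ((postPlus α ρ).trace).re

/-- Probability that Bob obtains outcome `Π` given Alice applied `A₋`. -/
def Pminus (α : ℝ) (ρ : Matrix (Fin 2 × Fin 2) (Fin 2 × Fin 2) ℂ)
    (Pi : Matrix (Fin 2) (Fin 2) ℂ) : ℝ :=
  ((((1 : Matrix (Fin 2) (Fin 2) ℂ) ⊗ₖ Pi) * postMinus α ρ).trace).re /
    ((postMinus α ρ).trace).re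

/-- Bob's `σy`-measurement projector onto `|+_y⟩ = (|0⟩ + i|1⟩)/√2`. -/
def Piy : Matrix (Fin 2) (Fin 2) ℂ :=
  (1/2 : ℂ) • !![1, -Complex.I; Complex.I, 1]

/-- Bob's rank-one projector `Π(z,u)` for an arbitrary projective measurement. -/
def Pizu (z u : ℝ) : Matrix (Fin 2) (Fin 2) ℂ :=
  !![((Real.cos (z/2))^2 : ℂ),
     (Real.cos (z/2) : ℂ) * (Real.sin (z/2) : ℂ) * Complex.exp (-(Complex.I * u));
     (Real.cos (z/2) : ℂ) * (Real.sin (z/2) : ℂ) * Complex.exp (Complex.I * u),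
     ((Real.sin (z/2))^2 : ℂ)]

/-- The single-qubit state `|+⟩ = (|0⟩ + |1⟩)/√2`. -/
def ketPlus : Fin 2 → ℂ := ![((1 / Real.sqrt 2 : ℝ) : ℂ), ((1 / Real.sqrt 2 : ℝ) : ℂ)]

/-- The single-qubit state `|−⟩ = (|0⟩ − |1⟩)/√2`. -/
def ketMinus : Fin 2 → ℂ := ![((1 / Real.sqrt 2 : ℝ) : ℂ), ((-(1 / Real.sqrt 2) : ℝ) : ℂ)]

/-- The (normalized) pure state `|ψ_{β,γ}⟩ = (β|++⟩ + γ|−−⟩)/√(β²+γ²)`. -/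
def ψpure (β γ : ℝ) : Fin 2 × Fin 2 → ℂ := fun q =>
  ((β : ℂ) * (ketPlus q.1 * ketPlus q.2) + (γ : ℂ) * (ketMinus q.1 * ketMinus q.2)) /
    ((Real.sqrt (β^2 + γ^2) : ℝ) : ℂ)

/-- The pure two-qubit density matrix `ρ_{β,γ} = |ψ_{β,γ}⟩⟨ψ_{β,γ}|`. -/
def ρpure (β γ : ℝ) : Matrix (Fin 2 × Fin 2) (Fin 2 × Fin 2) ℂ :=
  Matrix.vecMulVec (ψpure β γ) (fun q => starRingEnd ℂ (ψpure β γ q))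

/-- The maximally entangled state `|ψ⁺⟩ = (|00⟩ + |11⟩)/√2`. -/
def ψmax : Fin 2 × Fin 2 → ℂ := fun q =>
  if q.1 = q.2 then ((1 / Real.sqrt 2 : ℝ) : ℂ) else 0

/-- The two-qubit Werner state `ρ_W(p) = p |ψ⁺⟩⟨ψ⁺| + ((1-p)/4) 1`. -/
def ρWerner (p : ℝ) : Matrix (Fin 2 × Fin 2) (Fin 2 × Fin 2) ℂ :=
  (p : ℂ) • Matrix.vecMulVec ψmax (fun q => starRingEnd ℂ (ψmax q)) +
    (((1 - p) / 4 : ℝ) : ℂ) • 1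

/-- The canonical two-qubit state with magnetizations `mx my mz` (Alice),
`nx ny nz` (Bob) and diagonal correlators `Cxx Cyy Czz`. -/
def ρcan (mx my mz nx ny nz Cxx Cyy Czz : ℝ) :
    Matrix (Fin 2 × Fin 2) (Fin 2 × Fin 2) ℂ :=
  (1/4 : ℂ) • ((1 : Matrix (Fin 2 × Fin 2) (Fin 2 × Fin 2) ℂ)
    + (mx : ℂ) • (σx ⊗ₖ (1 : Matrix (Fin 2) (Fin 2) ℂ))
    + (my : ℂ) • (σy ⊗ₖ (1 : Matrix (Fin 2) (Fin 2) ℂ))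
    + (mz : ℂ) • (σz ⊗ₖ (1 : Matrix (Fin 2) (Fin 2) ℂ))
    + (nx : ℂ) • ((1 : Matrix (Fin 2) (Fin 2) ℂ) ⊗ₖ σx)
    + (ny : ℂ) • ((1 : Matrix (Fin 2) (Fin 2) ℂ) ⊗ₖ σy)
    + (nz : ℂ) • ((1 : Matrix (Fin 2) (Fin 2) ℂ) ⊗ₖ σz)
    + (Cxx : ℂ) • (σx ⊗ₖ σx)
    + (Cyy : ℂ) • (σy ⊗ₖ σy)
    + (Czz : ℂ) • (σz ⊗ₖ σz))

/-- Bob's reduced matrix: the partial trace over Alice's subsystem. -/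
def ptraceA (X : Matrix (Fin 2 × Fin 2) (Fin 2 × Fin 2) ℂ) :
    Matrix (Fin 2) (Fin 2) ℂ :=
  Matrix.of fun i j => ∑ k : Fin 2, X (k, i) (k, j)

/-- The trace distance `T(A,B) = (1/2) tr √((A-B)ᴴ (A-B))`, where the square
root is the positive semidefinite square root. -/
def traceDist (A B : Matrix (Fin 2) (Fin 2) ℂ) : ℝ :=
  (1/2) * ((((Matrix.posSemidef_conjTranspose_mul_self (A - B)).1.eigenvectorUnitary : Matrix (Fin 2) (Fin 2) ℂ) *
    Matrix.diagonal (((↑) : ℝ → ℂ) ∘ (Real.sqrt ·) ∘ (Matrix.posSemidef_conjTranspose_mul_self (A - B)).1.eigenvalues) *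
    (star (Matrix.posSemidef_conjTranspose_mul_self (A - B)).1.eigenvectorUnitary : Matrix (Fin 2) (Fin 2) ℂ)).trace).re

set_option maxHeartbeats 1000000

def vv (β γ : ℝ) : Fin 2 × Fin 2 → ℝ := fun p => if p.1 = p.2 then β + γ else β - γ

lemma ψ_apply (β γ : ℝ) (hβγ : β^2 + γ^2 ≠ 0) (p : Fin 2 × Fin 2) :
    ψpure β γ p = (vv β γ p : ℂ) / (2 * (Real.sqrt (β^2+γ^2) : ℝ)) := by
  have h2 : ((Real.sqrt 2 : ℝ) : ℂ) * ((Real.sqrt 2 : ℝ) : ℂ) = 2 := by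
    norm_cast; exact Real.mul_self_sqrt (by norm_num)
  have h2' : ((Real.sqrt 2 : ℝ) : ℂ) ≠ 0 := by norm_cast; positivity
  have h2inv : (((Real.sqrt 2 : ℝ) : ℂ))⁻¹ ^ 2 = 2⁻¹ := by
    rw [inv_pow, sq]; rw [h2]
  have hN : (0:ℝ) < β^2 + γ^2 := lt_of_le_of_ne (by positivity) (Ne.symm hβγ)
  have hr' : ((Real.sqrt (β^2+γ^2) : ℝ) : ℂ) ≠ 0 := by norm_cast; positivity
  obtain ⟨a, b⟩ := p
  fin_cases a <;> fin_cases b <;>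
    simp only [ψpure, ketPlus, ketMinus, vv, Matrix.cons_val_zero, Matrix.cons_val_one,
      Matrix.head_cons] <;>
    push_cast <;>
    rw [div_eq_div_iff hr' (by push_cast; exact mul_ne_zero two_ne_zero hr')] <;>
    ring_nf <;>
    rw [h2inv] <;> ring

lemma ρpure_apply (β γ : ℝ) (hβγ : β^2 + γ^2 ≠ 0) (p q : Fin 2 × Fin 2) :
    ρpure β γ p q = ((vv β γ p : ℂ) * (vv β γ q : ℂ)) / (4 * ((β^2+γ^2 : ℝ) : ℂ)) := by
  have hN : (0:ℝ) < β^2 + γ^2 := lt_of_le_of_ne (by positivity) (Ne.symm hβγ)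
  have hr : ((Real.sqrt (β^2+γ^2) : ℂ)) * (Real.sqrt (β^2+γ^2) : ℂ) = ((β^2+γ^2 : ℝ):ℂ) := by
    norm_cast; exact Real.mul_self_sqrt hN.le
  have hr' : ((Real.sqrt (β^2+γ^2) : ℝ) : ℂ) ≠ 0 := by norm_cast; positivity
  rw [ρpure, Matrix.vecMulVec_apply, ψ_apply β γ hβγ, ψ_apply β γ hβγ]
  simp only [map_div₀, _root_.map_mul, Complex.conj_ofReal, map_ofNat]
  rw [div_mul_div_comm, div_eq_div_iff
    (by exact mul_ne_zero (mul_ne_zero two_ne_zero hr') (mul_ne_zero two_ne_zero hr'))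
    (by exact mul_ne_zero (by norm_num) (by exact_mod_cast hβγ))]
  push_cast at hr ⊢
  linear_combination (-((vv β γ p : ℂ) * (vv β γ q : ℂ) * 4)) * hr

lemma traceT (α β γ : ℝ) (hβγ : β^2 + γ^2 ≠ 0) :
    (postPlus α (ρpure β γ)).trace = ((1 + Real.sin α ^ 2 : ℝ) : ℂ) := by
  have hNc : ((β^2+γ^2 : ℝ):ℂ) ≠ 0 := by exact_mod_cast hβγ
  simp only [postPlus, Matrix.trace, Matrix.diag_apply, Fintype.sum_prod_type,
    Fin.sum_univ_two, Matrix.mul_apply, Matrix.kroneckerMap_apply, Matrix.conjTranspose_apply,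
    Matrix.one_apply, Upt, Apos, Matrix.mul_one, ρpure_apply β γ hβγ, vv,
    Matrix.cons_val', Matrix.cons_val_zero, Matrix.cons_val_one, Matrix.head_cons,
    Matrix.empty_val', Matrix.cons_val_fin_one, Matrix.head_fin_const,
    Complex.star_def, Complex.conj_ofReal, map_neg, Complex.conj_I]
  have hc : (starRingEnd ℂ) (Complex.sin ↑α) = Complex.sin ↑α := by
    rw [← Complex.ofReal_sin, Complex.conj_ofReal]
  norm_num [hc]
  have hNc2 : ((β:ℂ)^2+(γ:ℂ)^2) ≠ 0 := by push_cast at hNc; exact hNc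
  field_simp
  linear_combination (-4*((β:ℂ)^2+(γ:ℂ)^2)) * Complex.I_sq

lemma ptraceA_ρpure (β γ : ℝ) (hβγ : β^2 + γ^2 ≠ 0) :
    ptraceA (ρpure β γ) =
      !![1/2, ((β^2-γ^2 : ℝ):ℂ)/(2*((β^2+γ^2 : ℝ):ℂ));
         ((β^2-γ^2 : ℝ):ℂ)/(2*((β^2+γ^2 : ℝ):ℂ)), 1/2] := by
  have hNc : ((β^2+γ^2 : ℝ):ℂ) ≠ 0 := by exact_mod_cast hβγ
  have hNc2 : ((β:ℂ)^2+(γ:ℂ)^2) ≠ 0 := by push_cast at hNc; exact hNc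
  ext i j
  fin_cases i <;> fin_cases j <;>
    simp only [ptraceA, Matrix.of_apply, Fin.sum_univ_two, ρpure_apply β γ hβγ, vv,
      Matrix.cons_val', Matrix.cons_val_zero, Matrix.cons_val_one, Matrix.head_cons,
      Matrix.empty_val', Matrix.cons_val_fin_one, Matrix.head_fin_const] <;>
    norm_num <;> field_simp <;> ring

lemma ptraceA_post (α β γ : ℝ) (hβγ : β^2 + γ^2 ≠ 0) :
    ptraceA (postPlus α (ρpure β γ)) =
      !![(1+(Real.sin α:ℂ)^2)/2,
         ((1+(Real.sin α:ℂ)^2)*((β^2-γ^2 : ℝ):ℂ) + 4*Complex.I*(Real.sin α:ℂ)*β*γ)/(2*((β^2+γ^2 : ℝ):ℂ));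
         ((1+(Real.sin α:ℂ)^2)*((β^2-γ^2 : ℝ):ℂ) - 4*Complex.I*(Real.sin α:ℂ)*β*γ)/(2*((β^2+γ^2 : ℝ):ℂ)),
         (1+(Real.sin α:ℂ)^2)/2] := by
  have hNc : ((β^2+γ^2 : ℝ):ℂ) ≠ 0 := by exact_mod_cast hβγ
  have hNc2 : ((β:ℂ)^2+(γ:ℂ)^2) ≠ 0 := by push_cast at hNc; exact hNc
  have hc : (starRingEnd ℂ) (Complex.sin ↑α) = Complex.sin ↑α := by
    rw [← Complex.ofReal_sin, Complex.conj_ofReal]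
  ext i j
  fin_cases i <;> fin_cases j <;>
    simp only [ptraceA, postPlus, Matrix.of_apply, Fintype.sum_prod_type,
      Fin.sum_univ_two, Matrix.mul_apply, Matrix.kroneckerMap_apply, Matrix.conjTranspose_apply,
      Matrix.one_apply, Upt, Apos, Matrix.mul_one, ρpure_apply β γ hβγ, vv,
      Matrix.cons_val', Matrix.cons_val_zero, Matrix.cons_val_one, Matrix.head_cons,
      Matrix.empty_val', Matrix.cons_val_fin_one, Matrix.head_fin_const,
      Complex.star_def, Complex.conj_ofReal, map_neg, Complex.conj_I] <;>
    norm_num [hc] <;> field_simp <;>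
    first
      | linear_combination (-64*((β:ℂ)^2+(γ:ℂ)^2)^3) * Complex.I_sq
      | linear_combination (64*((γ:ℂ)^2-(β:ℂ)^2)*((β:ℂ)^2+(γ:ℂ)^2)^3) * Complex.I_sq
      | linear_combination (-64*((γ:ℂ)^2-(β:ℂ)^2)*((β:ℂ)^2+(γ:ℂ)^2)^3) * Complex.I_sq
      | linear_combination (-4*((β:ℂ)^2+(γ:ℂ)^2)) * Complex.I_sq
      | linear_combination (4*((γ:ℂ)^2-(β:ℂ)^2)) * Complex.I_sq

/-- Appendix, Case 1: for the shared pure state `ρ_{β,γ}`, Bob's normalized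
reduced state after the PT evolution (Alice applying `A₊ = 1`) equals Bob's
initial reduced state iff `βγ sin α = 0`. -/
theorem stmt15 (α β γ : ℝ) (hβγ : β^2 + γ^2 ≠ 0) :
    (((postPlus α (ρpure β γ)).trace).re)⁻¹ • ptraceA (postPlus α (ρpure β γ)) =
      ptraceA (ρpure β γ) ↔ β * γ * Real.sin α = 0 := by
  have hNc : ((β^2+γ^2 : ℝ):ℂ) ≠ 0 := by exact_mod_cast hβγ
  have hNc2 : ((β:ℂ)^2+(γ:ℂ)^2) ≠ 0 := by push_cast at hNc; exact hNc
  have hN : (0:ℝ) < β^2 + γ^2 := lt_of_le_of_ne (by positivity) (Ne.symm hβγ)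
  have h1s : (0:ℝ) < 1 + Real.sin α ^ 2 := by positivity
  have h2s : ((1:ℂ)) + (Real.sin α : ℂ)^2 ≠ 0 := by exact_mod_cast h1s.ne'
  have hcast : (((1 + Real.sin α^2 : ℝ)):ℂ)⁻¹ = ((1:ℂ) + (Real.sin α : ℂ)^2)⁻¹ := by
    push_cast; ring
  have hT : (postPlus α (ρpure β γ)).trace = ((1 + Real.sin α ^ 2 : ℝ) : ℂ) :=
    traceT α β γ hβγ
  have h8 : (8:ℂ)*Complex.I*((β:ℂ)^2+(γ:ℂ)^2) ≠ 0 :=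
    mul_ne_zero (mul_ne_zero (by norm_num) Complex.I_ne_zero) hNc2
  have hsin : ((Real.sin α : ℝ):ℂ) = Complex.sin ↑α := Complex.ofReal_sin α
  rw [hT, Complex.ofReal_re, ptraceA_post α β γ hβγ, ptraceA_ρpure β γ hβγ]
  constructor
  · intro h
    have h01 := congrFun (congrFun h 0) 1
    simp only [Matrix.smul_apply, Matrix.of_apply, Matrix.cons_val', Matrix.cons_val_zero, Matrix.cons_val_one,
      Matrix.head_cons, Matrix.empty_val', Matrix.cons_val_fin_one, Matrix.head_fin_const,
      Complex.real_smul, Complex.ofReal_inv, hcast] at h01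
    rw [inv_mul_eq_iff_eq_mul₀ h2s] at h01
    push_cast at h01
    field_simp at h01
    have hz : ((β * γ * Real.sin α : ℝ):ℂ) = 0 := by
      push_cast
      linear_combination (-(Complex.I)/4) * h01 + ((β:ℂ)*↑γ*Complex.sin ↑α) * Complex.I_sq
    exact_mod_cast hz
  · intro h
    have hc : ((β:ℂ)) * γ * (Real.sin α : ℂ) = 0 := by exact_mod_cast congrArg (Complex.ofReal) h
    have hc2 : ((β:ℂ)) * γ * Complex.sin ↑α = 0 := by rwa [hsin] at hc
    ext i j
    fin_cases i <;> fin_cases j <;>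
      simp only [Matrix.smul_apply, Matrix.of_apply, Matrix.cons_val', Matrix.cons_val_zero, Matrix.cons_val_one,
        Matrix.head_cons, Matrix.empty_val', Matrix.cons_val_fin_one, Matrix.head_fin_const,
        Complex.real_smul, Complex.ofReal_inv, hcast] <;>
      rw [inv_mul_eq_iff_eq_mul₀ h2s] <;>
      push_cast <;>
      (try simp only [Matrix.cons_val', Matrix.cons_val_zero, Matrix.cons_val_one,
        Matrix.head_cons, Matrix.empty_val', Matrix.cons_val_fin_one, Matrix.head_fin_const]) <;>
      (try field_simp) <;>
      first
        | ring1
        | linear_combination (4*Complex.I) * hc2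
        | linear_combination (-(4*Complex.I)) * hc2
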